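/- Let T_1 and T_2 be vertex-disjoint trees with distinguished vertices v_1 ∈ V(T_1), v_2 ∈ V(T_2), let k ≥ 1, and let T be obtained from T_1 and k disjoint copies of T_2 by joining v_1 by an edge to the copy of v_2 in each copy of T_2. Then the characteristic polynomial satisfies φ(T) = φ(T_2)^{k-1} ( φ(T_1) φ(T_2) − k φ(T_1 − v_1) φ(T_2 − v_2) ). -/

import Mathlib

open scoped Classical

/-- Characteristic polynomial of the adjacency matrix of a graph. -/
noncomputable def gCharpoly {V : Type*} [Fintype V] (G : SimpleGraph V) : Polynomial ℝ :=
  letI := Classical.decEq V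
  letI := Classical.decRel G.Adj
  (G.adjMatrix ℝ).charpoly

/-- Adjacency eigenvalues listed in non-increasing order (with multiplicity). -/
noncomputable def eigsDesc {V : Type*} [Fintype V] (G : SimpleGraph V) : List ℝ :=
  ((gCharpoly G).roots.sort (· ≤ ·)).reverse

/-- Number of adjacency eigenvalues in the open interval (-1, 1), with multiplicity. -/
noncomputable def numIn {V : Type*} [Fintype V] (G : SimpleGraph V) : ℕ :=
  ((gCharpoly G).roots.filter (fun x => -1 < x ∧ x < 1)).card

/-- Multiplicity of `lam` as an adjacency eigenvalue. -/
noncomputable def multOf {V : Type*} [Fintype V] (G : SimpleGraph V) (lam : ℝ) : ℕ :=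
  (gCharpoly G).roots.count lam

/-- Nullity: dimension of the kernel of the adjacency matrix. -/
noncomputable def gNullity {V : Type*} [Fintype V] (G : SimpleGraph V) : ℕ :=
  letI := Classical.decRel G.Adj
  Module.finrank ℝ (LinearMap.ker (G.adjMatrix ℝ).mulVecLin)

/-- The tree obtained from `T₁` and `k` disjoint copies of `T₂` by joining the
vertex `v₁` of `T₁` to the copy of `v₂` in each copy of `T₂`. -/
def joinCopies {V₁ V₂ : Type*} (T₁ : SimpleGraph V₁) (T₂ : SimpleGraph V₂)
    (v₁ : V₁) (v₂ : V₂) (k : ℕ) : SimpleGraph (V₁ ⊕ (Fin k × V₂)) :=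
  SimpleGraph.fromRel (fun x y =>
    match x, y with
    | Sum.inl a, Sum.inl b => T₁.Adj a b
    | Sum.inr p, Sum.inr q => p.1 = q.1 ∧ T₂.Adj p.2 q.2
    | Sum.inl a, Sum.inr p => a = v₁ ∧ p.2 = v₂
    | _, _ => False)

section Helpers

open Matrix

lemma det_updateColumn_single {K : Type*} [CommRing K] {V : Type*} [Fintype V] [DecidableEq V]
    (M : Matrix V V K) (v : V) :
    (M.updateCol v (Pi.single v 1)).det =
      (M.submatrix (Subtype.val : {x | x ≠ v} → V) Subtype.val).det := by
  haveI : Unique {x // x = v} := ⟨⟨⟨v, rfl⟩⟩, fun a => Subtype.ext a.2⟩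
  rw [← Matrix.det_submatrix_equiv_self (Equiv.sumCompl (fun x => x = v))]
  have h : (M.updateCol v (Pi.single v 1)).submatrix
        (Equiv.sumCompl (fun x => x = v)) (Equiv.sumCompl (fun x => x = v)) =
      Matrix.fromBlocks (Matrix.of fun _ _ => (1 : K))
        (Matrix.of fun (_ : {x // x = v}) (b : {x // ¬ x = v}) => M v (b : V)) 0
        (M.submatrix (Subtype.val : {x | x ≠ v} → V) Subtype.val) := by
    ext i j
    rcases i with a | a <;> rcases j with b | b <;>
      simp [Matrix.updateCol_apply, b.2, a.2, Pi.single_apply]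
  rw [h, Matrix.det_fromBlocks_zero₂₁]
  simp

lemma det_updateRow_single {K : Type*} [CommRing K] {V : Type*} [Fintype V] [DecidableEq V]
    (M : Matrix V V K) (v : V) :
    (M.updateRow v (Pi.single v 1)).det =
      (M.submatrix (Subtype.val : {x | x ≠ v} → V) Subtype.val).det := by
  rw [← Matrix.det_transpose, ← Matrix.updateCol_transpose, det_updateColumn_single,
    ← Matrix.transpose_submatrix, Matrix.det_transpose]

lemma det_sub_single {K : Type*} [CommRing K] {V : Type*} [Fintype V] [DecidableEq V]
    (M : Matrix V V K) (v : V) (t : K) :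
    (M - t • Matrix.vecMulVec (Pi.single v 1) (Pi.single v 1)).det =
      M.det - t * (M.submatrix (Subtype.val : {x | x ≠ v} → V) Subtype.val).det := by
  have h : M - t • Matrix.vecMulVec (Pi.single v 1) (Pi.single v 1) =
      M.updateCol v ((fun i => M i v) + (-t) • (Pi.single v 1 : V → K)) := by
    ext i j
    by_cases hj : j = v <;>
      simp [Matrix.updateCol_apply, hj, Matrix.vecMulVec_apply, Pi.single_apply,
        sub_eq_add_neg, mul_comm]
  rw [h, Matrix.det_updateCol_add, Matrix.det_updateCol_smul, Matrix.updateCol_eq_self,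
    det_updateColumn_single]
  ring

lemma vecMulVec_mul_vecMulVec {K : Type*} [CommRing K] {m n : Type*} [Fintype m] [Fintype n]
    (u : m → K) (w : n → K) (M : Matrix n n K) (w' : n → K) (u' : m → K) :
    Matrix.vecMulVec u w * M * Matrix.vecMulVec w' u' =
      (w ⬝ᵥ M.mulVec w') • Matrix.vecMulVec u u' := by
  ext a b
  simp only [Matrix.mul_apply, Matrix.vecMulVec_apply, Matrix.smul_apply, Matrix.mulVec,
    dotProduct, smul_eq_mul, Finset.sum_mul, Finset.mul_sum]
  rw [Finset.sum_comm]
  apply Finset.sum_congr rfl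
  intro x _
  apply Finset.sum_congr rfl
  intro y _
  ring

lemma charmatrix_blockDiagonal {R : Type*} [CommRing R] {o m : Type*} [DecidableEq o]
    [DecidableEq m] [Fintype o] [Fintype m] (f : o → Matrix m m R) :
    Matrix.charmatrix (Matrix.blockDiagonal f) =
      Matrix.blockDiagonal fun i => Matrix.charmatrix (f i) := by
  ext ⟨a, i⟩ ⟨b, j⟩
  by_cases hij : i = j
  · subst hij
    by_cases hab : a = b
    · subst hab
      simp [Matrix.charmatrix_apply, Matrix.blockDiagonal_apply, Matrix.diagonal_apply]
    · simp [Matrix.charmatrix_apply, Matrix.blockDiagonal_apply, Matrix.diagonal_apply,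
        Prod.ext_iff, hab]
  · simp [Matrix.charmatrix_apply, Matrix.blockDiagonal_apply, Matrix.diagonal_apply,
      Prod.ext_iff, hij]

lemma gCharpoly_eq {V : Type*} [Fintype V] [DecidableEq V] (G : SimpleGraph V)
    [DecidableRel G.Adj] : gCharpoly G = (G.adjMatrix ℝ).charpoly := by
  unfold gCharpoly
  congr!

lemma joinCopies_adj_inl_inl {V₁ V₂ : Type*} (T₁ : SimpleGraph V₁) (T₂ : SimpleGraph V₂)
    (v₁ : V₁) (v₂ : V₂) (k : ℕ) (a b : V₁) :
    (joinCopies T₁ T₂ v₁ v₂ k).Adj (Sum.inl a) (Sum.inl b) ↔ T₁.Adj a b := by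
  rw [joinCopies, SimpleGraph.fromRel_adj]
  constructor
  · rintro ⟨-, h | h⟩
    · exact h
    · exact h.symm
  · intro h
    exact ⟨by simpa using h.ne, Or.inl h⟩

lemma joinCopies_adj_inr_inr {V₁ V₂ : Type*} (T₁ : SimpleGraph V₁) (T₂ : SimpleGraph V₂)
    (v₁ : V₁) (v₂ : V₂) (k : ℕ) (p q : Fin k × V₂) :
    (joinCopies T₁ T₂ v₁ v₂ k).Adj (Sum.inr p) (Sum.inr q) ↔ p.1 = q.1 ∧ T₂.Adj p.2 q.2 := by
  rw [joinCopies, SimpleGraph.fromRel_adj]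
  constructor
  · rintro ⟨-, ⟨h1, h2⟩ | ⟨h1, h2⟩⟩
    · exact ⟨h1, h2⟩
    · exact ⟨h1.symm, h2.symm⟩
  · rintro ⟨h1, h2⟩
    refine ⟨?_, Or.inl ⟨h1, h2⟩⟩
    intro hpq
    have : p = q := by simpa using hpq
    exact h2.ne (by rw [this])

lemma joinCopies_adj_inl_inr {V₁ V₂ : Type*} (T₁ : SimpleGraph V₁) (T₂ : SimpleGraph V₂)
    (v₁ : V₁) (v₂ : V₂) (k : ℕ) (a : V₁) (p : Fin k × V₂) :
    (joinCopies T₁ T₂ v₁ v₂ k).Adj (Sum.inl a) (Sum.inr p) ↔ a = v₁ ∧ p.2 = v₂ := by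
  rw [joinCopies, SimpleGraph.fromRel_adj]
  simp

lemma det_map {R S n : Type*} [CommRing R] [CommRing S] [Fintype n] [DecidableEq n]
    (f : R →+* S) (M : Matrix n n R) : (M.map f).det = f M.det := by
  rw [← RingHom.mapMatrix_apply, ← RingHom.map_det]

end Helpers

theorem stmt14 {V₁ V₂ : Type*} [Fintype V₁] [Fintype V₂]
    (T₁ : SimpleGraph V₁) (T₂ : SimpleGraph V₂) (hT₁ : T₁.IsTree) (hT₂ : T₂.IsTree)
    (v₁ : V₁) (v₂ : V₂) (k : ℕ) (hk : 1 ≤ k) :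
    gCharpoly (joinCopies T₁ T₂ v₁ v₂ k) =
      (gCharpoly T₂) ^ (k - 1) *
        (gCharpoly T₁ * gCharpoly T₂ -
          (k : Polynomial ℝ) * gCharpoly (T₁.induce {x | x ≠ v₁}) *
            gCharpoly (T₂.induce {x | x ≠ v₂})) := by
  classical
  open Matrix Polynomial in
  -- move to the fraction field
  set K := FractionRing (Polynomial ℝ) with hKdef
  set ι : Polynomial ℝ →+* K := (algebraMap (Polynomial ℝ) K : Polynomial ℝ →+* K) with hιdef
  have hι : Function.Injective ι := IsFractionRing.injective _ _
  apply hι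
  -- notation
  set A₁ : Matrix V₁ V₁ ℝ := T₁.adjMatrix ℝ with hA₁def
  set A₂ : Matrix V₂ V₂ ℝ := T₂.adjMatrix ℝ with hA₂def
  set N₁ : Matrix V₁ V₁ K := (Matrix.charmatrix A₁).map ι with hN₁def
  set N₂ : Matrix V₂ V₂ K := (Matrix.charmatrix A₂).map ι with hN₂def
  set d₁ : K := ι (gCharpoly T₁) with hd₁def
  set d₂ : K := ι (gCharpoly T₂) with hd₂def
  set m₁ : K := ι (gCharpoly (T₁.induce {x | x ≠ v₁})) with hm₁def
  set m₂ : K := ι (gCharpoly (T₂.induce {x | x ≠ v₂})) with hm₂def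
  -- determinants
  have hdet₁ : N₁.det = d₁ := by
    rw [hN₁def, _root_.det_map, hd₁def, gCharpoly_eq]
    rfl
  have hdet₂ : N₂.det = d₂ := by
    rw [hN₂def, _root_.det_map, hd₂def, gCharpoly_eq]
    rfl
  have hd2ne : d₂ ≠ 0 := by
    rw [hd₂def, gCharpoly_eq]
    intro h
    exact (Matrix.charpoly_monic (A₂)).ne_zero ((map_eq_zero_iff ι hι).mp h)
  -- minors
  have hminor₁ : (N₁.submatrix (Subtype.val : {x | x ≠ v₁} → V₁) Subtype.val).det = m₁ := by
    have hsub : (Matrix.charmatrix A₁).submatrix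
          (Subtype.val : {x | x ≠ v₁} → V₁) Subtype.val =
        Matrix.charmatrix ((T₁.induce {x | x ≠ v₁}).adjMatrix ℝ) := by
      ext i j
      by_cases h : i = j
      · subst h
        simp [Matrix.charmatrix_apply_eq, hA₁def, hA₂def]
      · rw [Matrix.submatrix_apply, Matrix.charmatrix_apply_ne _ _ _ (fun hh => h (Subtype.ext hh)),
          Matrix.charmatrix_apply_ne _ _ _ h]
        have : A₁ (↑i) (↑j) = (SimpleGraph.adjMatrix ℝ (T₁.induce {x | x ≠ v₁})) i j := by
          simp [hA₁def]
        rw [this]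
    rw [hN₁def, Matrix.submatrix_map, _root_.det_map, hsub, hm₁def, gCharpoly_eq]
    rfl
  have hminor₂ : (N₂.submatrix (Subtype.val : {x | x ≠ v₂} → V₂) Subtype.val).det = m₂ := by
    have hsub : (Matrix.charmatrix A₂).submatrix
          (Subtype.val : {x | x ≠ v₂} → V₂) Subtype.val =
        Matrix.charmatrix ((T₂.induce {x | x ≠ v₂}).adjMatrix ℝ) := by
      ext i j
      by_cases h : i = j
      · subst h
        simp [Matrix.charmatrix_apply_eq, hA₁def, hA₂def]
      · rw [Matrix.submatrix_apply, Matrix.charmatrix_apply_ne _ _ _ (fun hh => h (Subtype.ext hh)),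
          Matrix.charmatrix_apply_ne _ _ _ h]
        have : A₂ (↑i) (↑j) = (SimpleGraph.adjMatrix ℝ (T₂.induce {x | x ≠ v₂})) i j := by
          simp [hA₂def]
        rw [this]
    rw [hN₂def, Matrix.submatrix_map, _root_.det_map, hsub, hm₂def, gCharpoly_eq]
    rfl
  -- block structure of the adjacency matrix of the join
  set e : Fin k × V₂ ≃ V₂ × Fin k := Equiv.prodComm _ _ with hedef
  set B₀ : Matrix V₁ (Fin k × V₂) ℝ :=
    Matrix.of (fun a p => if a = v₁ ∧ p.2 = v₂ then (1 : ℝ) else 0) with hB₀def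
  set D₀ : Matrix (Fin k × V₂) (Fin k × V₂) ℝ :=
    (Matrix.blockDiagonal fun _ : Fin k => A₂).submatrix e e with hD₀def
  have hAdj : (joinCopies T₁ T₂ v₁ v₂ k).adjMatrix ℝ = Matrix.fromBlocks A₁ B₀ B₀ᵀ D₀ := by
    ext i j
    rcases i with a | p <;> rcases j with b | q
    · simp [joinCopies_adj_inl_inl, hA₁def]
    · simp [joinCopies_adj_inl_inr, hB₀def]
    · rw [Matrix.fromBlocks_apply₂₁, SimpleGraph.adjMatrix_apply,
        (joinCopies T₁ T₂ v₁ v₂ k).adj_comm, joinCopies_adj_inl_inr]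
      simp [hB₀def]
    · rw [Matrix.fromBlocks_apply₂₂, SimpleGraph.adjMatrix_apply, joinCopies_adj_inr_inr]
      by_cases h : p.1 = q.1 <;>
        simp [hD₀def, Matrix.blockDiagonal_apply, hedef, h, hA₂def]
  -- the mapped charmatrix as a block matrix
  set B' : Matrix V₁ (Fin k × V₂) K := ((-(B₀.map Polynomial.C)).map ι) with hB'def
  set C' : Matrix (Fin k × V₂) V₁ K := ((-((B₀ᵀ).map Polynomial.C)).map ι) with hC'def
  set DK : Matrix (Fin k × V₂) (Fin k × V₂) K :=
    (Matrix.blockDiagonal fun _ : Fin k => N₂).submatrix e e with hDKdef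
  have hDK : (Matrix.charmatrix D₀).map ι = DK := by
    rw [hD₀def]
    have h1 : (Matrix.blockDiagonal fun _ : Fin k => A₂).submatrix e e =
        Matrix.reindex e.symm e.symm (Matrix.blockDiagonal fun _ : Fin k => A₂) := rfl
    rw [h1, Matrix.charmatrix_reindex, charmatrix_blockDiagonal]
    rw [hDKdef]
    ext p q
    simp [Matrix.reindex_apply, Matrix.blockDiagonal_apply, hN₂def, apply_ite ι]
  have hCM : (Matrix.charmatrix ((joinCopies T₁ T₂ v₁ v₂ k).adjMatrix ℝ)).map ι =
      Matrix.fromBlocks N₁ B' C' DK := by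
    rw [hAdj, Matrix.charmatrix_fromBlocks, Matrix.fromBlocks_map, hDK]
  -- invertibility of DK
  have hN₂unit : IsUnit N₂.det := by
    rw [hdet₂]
    exact isUnit_iff_ne_zero.mpr hd2ne
  set Dinv : Matrix (Fin k × V₂) (Fin k × V₂) K :=
    (Matrix.blockDiagonal fun _ : Fin k => N₂⁻¹).submatrix e e with hDinvdef
  have hmul1 : DK * Dinv = 1 := by
    rw [hDKdef, hDinvdef, Matrix.submatrix_mul_equiv, ← Matrix.blockDiagonal_mul]
    have : (fun _ : Fin k => N₂ * N₂⁻¹) = (1 : Fin k → Matrix V₂ V₂ K) := by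
      funext i
      exact Matrix.mul_nonsing_inv _ hN₂unit
    rw [this, Matrix.blockDiagonal_one, Matrix.submatrix_one_equiv]
  have hmul2 : Dinv * DK = 1 := by
    rw [hDKdef, hDinvdef, Matrix.submatrix_mul_equiv, ← Matrix.blockDiagonal_mul]
    have : (fun _ : Fin k => N₂⁻¹ * N₂) = (1 : Fin k → Matrix V₂ V₂ K) := by
      funext i
      exact Matrix.nonsing_inv_mul _ hN₂unit
    rw [this, Matrix.blockDiagonal_one, Matrix.submatrix_one_equiv]
  haveI hDKinv : Invertible DK := ⟨Dinv, hmul2, hmul1⟩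
  have hinvOf : ⅟DK = Dinv := invOf_eq_right_inv hmul1
  have hdetDK : DK.det = d₂ ^ k := by
    rw [hDKdef, Matrix.det_submatrix_equiv_self, Matrix.det_blockDiagonal]
    simp [hdet₂]
  -- the Schur complement computation
  have hN2entry : N₂⁻¹ v₂ v₂ = m₂ * d₂⁻¹ := by
    rw [Matrix.inv_def, Matrix.smul_apply, Matrix.adjugate_apply, det_updateRow_single,
      hminor₂, hdet₂, smul_eq_mul, Ring.inverse_eq_inv', mul_comm]
  set w : Fin k × V₂ → K := fun x => if x.2 = v₂ then (1 : K) else 0 with hwdef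
  have hB'v : B' = -Matrix.vecMulVec (Pi.single v₁ 1) w := by
    ext a x
    by_cases h1 : a = v₁ <;> by_cases h2 : x.2 = v₂ <;>
      simp [hB'def, hB₀def, hwdef, h1, h2, Matrix.vecMulVec_apply, Pi.single_apply]
  have hC'v : C' = -Matrix.vecMulVec w (Pi.single v₁ 1) := by
    ext x a
    by_cases h1 : a = v₁ <;> by_cases h2 : x.2 = v₂ <;>
      simp [hC'def, hB₀def, hwdef, h1, h2, Matrix.vecMulVec_apply, Pi.single_apply]
  have hdot : w ⬝ᵥ Dinv.mulVec w = (k : K) * (m₂ * d₂⁻¹) := by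
    rw [hDinvdef, hwdef]
    simp only [dotProduct, Matrix.mulVec, Matrix.submatrix_apply, Matrix.blockDiagonal_apply,
      hedef, Equiv.prodComm_apply, Prod.swap_prod_mk, Fintype.sum_prod_type]
    simp [Finset.sum_ite_eq', hN2entry, Finset.mul_sum, mul_comm]
  have hprod : B' * ⅟DK * C' =
      ((k : K) * (m₂ * d₂⁻¹)) • Matrix.vecMulVec (Pi.single v₁ 1) (Pi.single v₁ 1) := by
    rw [hinvOf, hB'v, hC'v, Matrix.neg_mul, Matrix.mul_neg, Matrix.neg_mul, neg_neg,
      _root_.vecMulVec_mul_vecMulVec, hdot]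
  -- putting it together
  have hLHS : ι (gCharpoly (joinCopies T₁ T₂ v₁ v₂ k)) =
      d₂ ^ k * (d₁ - ((k : K) * (m₂ * d₂⁻¹)) * m₁) := by
    have hstep : ι ((joinCopies T₁ T₂ v₁ v₂ k).adjMatrix ℝ).charpoly =
        ((Matrix.charmatrix ((joinCopies T₁ T₂ v₁ v₂ k).adjMatrix ℝ)).map ι).det :=
      (det_map ι _).symm
    rw [gCharpoly_eq, hstep, hCM, Matrix.det_fromBlocks₂₂,
      hdetDK, hprod, det_sub_single, hdet₁, hminor₁]
  rw [hLHS]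
  simp only [_root_.map_mul, _root_.map_sub, map_pow, map_natCast]
  rw [← hd₁def, ← hd₂def, ← hm₁def, ← hm₂def]
  obtain ⟨k', rfl⟩ : ∃ k', k = k' + 1 := ⟨k - 1, (Nat.succ_pred_eq_of_pos hk).symm⟩
  simp only [Nat.add_sub_cancel]
  have h' : d₂ * d₂⁻¹ = 1 := mul_inv_cancel₀ hd2ne
  linear_combination (-(d₂ ^ k' * ((k' + 1 : ℕ) : K) * m₁ * m₂)) * h'
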